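/- Let f and f̂ be two continuous strictly positive probability densities on [0,1] such that f, f̂ and u'' are all logconcave and the likelihood ratio f̂(t)/f(t) is nondecreasing in t. Let (0 = s₀ < s₁ < … < s_N = 1; x₁,…,x_N) be a solution of the dual system for (f, u), and let (0 = ŝ₀ < ŝ₁ < … < ŝ_N = 1; x̂₁,…,x̂_N) be a solution of the dual system for (f̂, u), i.e., with φ replaced by the conditional mean φ̂ computed from f̂. Then ŝ_k ≥ s_k for all k = 1,…,N−1 and x̂_k ≥ x_k for all k = 1,…,N. -/

import Mathlib

open MeasureTheory Set

/-- The mean of the "density" `g` conditional on the interval `(a, b)`. -/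
noncomputable def condMean (g : ℝ → ℝ) (a b : ℝ) : ℝ :=
  (∫ t in a..b, t * g t) / (∫ t in a..b, g t)

/-- A strictly positive function on `[0,1]` is logconcave if its log is concave there. -/
def LogConcaveOn01 (g : ℝ → ℝ) : Prop :=
  ConcaveOn ℝ (Icc (0:ℝ) 1) fun t => Real.log (g t)

/-- The dual system: cutoffs `0 = s 0 < s 1 < … < s N = 1` and signals `x 1, …, x N`. -/
def DualSystem (g w : ℝ → ℝ) (N : ℕ) (s x : ℕ → ℝ) : Prop :=
  s 0 = 0 ∧ s N = 1 ∧ (∀ k < N, s k < s (k + 1)) ∧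
    (∀ k, 1 ≤ k → k ≤ N → x k = condMean g (s (k - 1)) (s k)) ∧
    (∀ k, 1 ≤ k → k ≤ N - 1 → s k = condMean w (x k) (x (k + 1)))

open intervalIntegral

section Basics
variable {g : ℝ → ℝ} {a b : ℝ}

lemma intble (hg : ContinuousOn g (Icc a b)) (hab : a ≤ b) :
    IntervalIntegrable g volume a b :=
  (hg.mono (by rw [uIcc_of_le hab])).intervalIntegrable

lemma intble_id_mul (hg : ContinuousOn g (Icc a b)) (hab : a ≤ b) :
    IntervalIntegrable (fun t => t * g t) volume a b :=
  ((continuousOn_id.mul hg).mono (by rw [uIcc_of_le hab])).intervalIntegrable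

lemma I0_pos (hg : ContinuousOn g (Icc a b)) (hpos : ∀ t ∈ Icc a b, 0 < g t)
    (hab : a < b) : 0 < ∫ t in a..b, g t :=
  intervalIntegral_pos_of_pos_on (intble hg hab.le)
    (fun t ht => hpos t ⟨ht.1.le, ht.2.le⟩) hab

lemma mean_lt (hg : ContinuousOn g (Icc a b)) (hpos : ∀ t ∈ Icc a b, 0 < g t)
    (hab : a < b) : condMean g a b < b := by
  have h0 := I0_pos hg hpos hab
  rw [condMean, div_lt_iff₀ h0]
  have : (0:ℝ) < ∫ t in a..b, (b - t) * g t := by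
    refine intervalIntegral_pos_of_pos_on ?_ (fun t ht => mul_pos (by linarith [ht.2])
      (hpos t ⟨ht.1.le, ht.2.le⟩)) hab
    exact (((continuousOn_const.sub continuousOn_id).mul hg).mono
      (by rw [uIcc_of_le hab.le])).intervalIntegrable
  have heq : (∫ t in a..b, (b - t) * g t)
      = b * (∫ t in a..b, g t) - ∫ t in a..b, t * g t := by
    rw [← intervalIntegral.integral_const_mul, ← intervalIntegral.integral_sub
      ((intble hg hab.le).const_mul b) (intble_id_mul hg hab.le)]
    congr 1; ext t; ring
  linarith [heq ▸ this]

lemma lt_mean (hg : ContinuousOn g (Icc a b)) (hpos : ∀ t ∈ Icc a b, 0 < g t)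
    (hab : a < b) : a < condMean g a b := by
  have h0 := I0_pos hg hpos hab
  rw [condMean, lt_div_iff₀ h0]
  have : (0:ℝ) < ∫ t in a..b, (t - a) * g t := by
    refine intervalIntegral_pos_of_pos_on ?_ (fun t ht => mul_pos (by linarith [ht.1])
      (hpos t ⟨ht.1.le, ht.2.le⟩)) hab
    exact (((continuousOn_id.sub continuousOn_const).mul hg).mono
      (by rw [uIcc_of_le hab.le])).intervalIntegrable
  have heq : (∫ t in a..b, (t - a) * g t)
      = (∫ t in a..b, t * g t) - a * ∫ t in a..b, g t := by
    rw [← intervalIntegral.integral_const_mul, ← intervalIntegral.integral_sub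
      (intble_id_mul hg hab.le) ((intble hg hab.le).const_mul a)]
    congr 1; ext t; ring
  linarith [heq ▸ this]

end Basics

section Mono
variable {g : ℝ → ℝ} {a a' b b' : ℝ}

/-- Strict monotonicity of the conditional mean in the left endpoint. -/
lemma mean_mono_left (hg : ContinuousOn g (Icc a b)) (hpos : ∀ t ∈ Icc a b, 0 < g t)
    (ha : a < a') (hb : a' < b) : condMean g a b < condMean g a' b := by
  have hsub1 : Icc a a' ⊆ Icc a b := Icc_subset_Icc le_rfl hb.le
  have hsub2 : Icc a' b ⊆ Icc a b := Icc_subset_Icc ha.le le_rfl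
  have h01 := I0_pos (hg.mono hsub1) (fun t ht => hpos t (hsub1 ht)) ha
  have h02 := I0_pos (hg.mono hsub2) (fun t ht => hpos t (hsub2 ht)) hb
  have hm1 := mean_lt (hg.mono hsub1) (fun t ht => hpos t (hsub1 ht)) ha
  have hm2 := lt_mean (hg.mono hsub2) (fun t ht => hpos t (hsub2 ht)) hb
  have e0 : (∫ t in a..b, g t) = (∫ t in a..a', g t) + ∫ t in a'..b, g t :=
    (intervalIntegral.integral_add_adjacent_intervals
      (intble (hg.mono hsub1) ha.le) (intble (hg.mono hsub2) hb.le)).symm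
  have e1 : (∫ t in a..b, t * g t) = (∫ t in a..a', t * g t) + ∫ t in a'..b, t * g t :=
    (intervalIntegral.integral_add_adjacent_intervals
      (intble_id_mul (hg.mono hsub1) ha.le) (intble_id_mul (hg.mono hsub2) hb.le)).symm
  rw [condMean, condMean, e0, e1, div_lt_div_iff₀ (by linarith) h02]
  have k1 : (∫ t in a..a', t * g t) < a' * ∫ t in a..a', g t := by
    have := mean_lt (hg.mono hsub1) (fun t ht => hpos t (hsub1 ht)) ha
    rw [condMean, div_lt_iff₀ h01] at this; linarith
  have k2 : a' * (∫ t in a'..b, g t) < ∫ t in a'..b, t * g t := by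
    have := lt_mean (hg.mono hsub2) (fun t ht => hpos t (hsub2 ht)) hb
    rw [condMean, lt_div_iff₀ h02] at this; linarith
  nlinarith [mul_lt_mul_of_pos_right k1 h02, mul_lt_mul_of_pos_left k2 h01]

/-- Strict monotonicity of the conditional mean in the right endpoint. -/
lemma mean_mono_right (hg : ContinuousOn g (Icc a b)) (hpos : ∀ t ∈ Icc a b, 0 < g t)
    (ha : a < b') (hb : b' < b) : condMean g a b' < condMean g a b := by
  have hsub1 : Icc a b' ⊆ Icc a b := Icc_subset_Icc le_rfl hb.le
  have hsub2 : Icc b' b ⊆ Icc a b := Icc_subset_Icc ha.le le_rfl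
  have h01 := I0_pos (hg.mono hsub1) (fun t ht => hpos t (hsub1 ht)) ha
  have h02 := I0_pos (hg.mono hsub2) (fun t ht => hpos t (hsub2 ht)) hb
  have e0 : (∫ t in a..b, g t) = (∫ t in a..b', g t) + ∫ t in b'..b, g t :=
    (intervalIntegral.integral_add_adjacent_intervals
      (intble (hg.mono hsub1) ha.le) (intble (hg.mono hsub2) hb.le)).symm
  have e1 : (∫ t in a..b, t * g t) = (∫ t in a..b', t * g t) + ∫ t in b'..b, t * g t :=
    (intervalIntegral.integral_add_adjacent_intervals
      (intble_id_mul (hg.mono hsub1) ha.le) (intble_id_mul (hg.mono hsub2) hb.le)).symm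
  rw [condMean, condMean, e0, e1, div_lt_div_iff₀ h01 (by linarith)]
  have k1 : (∫ t in a..b', t * g t) < b' * ∫ t in a..b', g t := by
    have := mean_lt (hg.mono hsub1) (fun t ht => hpos t (hsub1 ht)) ha
    rw [condMean, div_lt_iff₀ h01] at this; linarith
  have k2 : b' * (∫ t in b'..b, g t) < ∫ t in b'..b, t * g t := by
    have := lt_mean (hg.mono hsub2) (fun t ht => hpos t (hsub2 ht)) hb
    rw [condMean, lt_div_iff₀ h02] at this; linarith
  nlinarith [mul_lt_mul_of_pos_right k1 h02, mul_lt_mul_of_pos_left k2 h01]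

end Mono

section Cheby
variable {g L : ℝ → ℝ} {a b : ℝ}

/-- Chebyshev-type inequality: multiplying a positive density by a nondecreasing positive
factor raises the conditional mean. -/
lemma mean_le_mean_mul (hg : ContinuousOn g (Icc a b)) (hpos : ∀ t ∈ Icc a b, 0 < g t)
    (hL : ContinuousOn L (Icc a b)) (hLpos : ∀ t ∈ Icc a b, 0 < L t)
    (hLmono : MonotoneOn L (Icc a b)) (hab : a < b) :
    condMean g a b ≤ condMean (fun t => L t * g t) a b := by
  have h0 := I0_pos hg hpos hab
  have hLg : ContinuousOn (fun t => L t * g t) (Icc a b) := hL.mul hg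
  have h0L := I0_pos hLg (fun t ht => mul_pos (hLpos t ht) (hpos t ht)) hab
  set c : ℝ := (∫ t in a..b, L t * g t) / (∫ t in a..b, g t) with hc
  -- c is between L a and L b
  have hca : L a ≤ c := by
    rw [hc, le_div_iff₀ h0]
    have : (∫ t in a..b, L a * g t) ≤ ∫ t in a..b, L t * g t := by
      refine intervalIntegral.integral_mono_on hab.le ((intble hg hab.le).const_mul _)
        (intble hLg hab.le) (fun t ht => ?_)
      exact mul_le_mul_of_nonneg_right (hLmono (left_mem_Icc.2 hab.le) ht ht.1) (hpos t ht).le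
    rwa [intervalIntegral.integral_const_mul] at this
  have hcb : c ≤ L b := by
    rw [hc, div_le_iff₀ h0]
    have : (∫ t in a..b, L t * g t) ≤ ∫ t in a..b, L b * g t := by
      refine intervalIntegral.integral_mono_on hab.le (intble hLg hab.le)
        ((intble hg hab.le).const_mul _) (fun t ht => ?_)
      exact mul_le_mul_of_nonneg_right (hLmono ht (right_mem_Icc.2 hab.le) ht.2) (hpos t ht).le
    rwa [intervalIntegral.integral_const_mul] at this
  obtain ⟨t₀, ht₀, hLt₀⟩ := intermediate_value_Icc hab.le hL ⟨hca, hcb⟩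
  -- the key nonnegative integral
  have hnn : (0:ℝ) ≤ ∫ t in a..b, (t - t₀) * (L t - c) * g t := by
    refine intervalIntegral.integral_nonneg hab.le (fun t ht => ?_)
    rcases le_total t t₀ with h | h
    · have : L t ≤ c := hLt₀ ▸ hLmono ht ht₀ h
      have h2 : (0:ℝ) ≤ (t - t₀) * (L t - c) := by nlinarith
      exact mul_nonneg h2 (hpos t ht).le
    · have : c ≤ L t := hLt₀ ▸ hLmono ht₀ ht h
      exact mul_nonneg (mul_nonneg (by linarith) (by linarith)) (hpos t ht).le
  have hexp : (∫ t in a..b, (t - t₀) * (L t - c) * g t)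
      = (∫ t in a..b, t * (L t * g t)) - c * (∫ t in a..b, t * g t)
        - t₀ * (∫ t in a..b, L t * g t) + t₀ * c * (∫ t in a..b, g t) := by
    have i1 := intble_id_mul hLg hab.le
    have i2 := (intble_id_mul hg hab.le).const_mul c
    have i3 := (intble hLg hab.le).const_mul t₀
    have i4 := (intble hg hab.le).const_mul (t₀ * c)
    have : (∫ t in a..b, (t - t₀) * (L t - c) * g t)
        = ∫ t in a..b, (t * (L t * g t) - c * (t * g t) - t₀ * (L t * g t)
            + (t₀ * c) * g t) := by
      congr 1; ext t; ring
    rw [this, intervalIntegral.integral_add (i1.sub i2 |>.sub i3) i4,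
      intervalIntegral.integral_sub (i1.sub i2) i3, intervalIntegral.integral_sub i1 i2,
      intervalIntegral.integral_const_mul, intervalIntegral.integral_const_mul,
      intervalIntegral.integral_const_mul]
  have hcancel : c * (∫ t in a..b, g t) = ∫ t in a..b, L t * g t := by
    rw [hc, div_mul_cancel₀ _ h0.ne']
  have h5 : t₀ * c * (∫ t in a..b, g t) = t₀ * ∫ t in a..b, L t * g t := by
    rw [mul_assoc, hcancel]
  have key : c * (∫ t in a..b, t * g t) ≤ ∫ t in a..b, t * (L t * g t) := by linarith
  rw [condMean, condMean, div_le_div_iff₀ h0 h0L]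
  calc (∫ t in a..b, t * g t) * ∫ t in a..b, (fun t => L t * g t) t
      = c * (∫ t in a..b, t * g t) * (∫ t in a..b, g t) := by
        simp only []; rw [← hcancel]; ring
    _ ≤ (∫ t in a..b, t * (L t * g t)) * (∫ t in a..b, g t) :=
        mul_le_mul_of_nonneg_right key h0.le
    _ = (∫ t in a..b, (fun t => t * ((fun t => L t * g t) t)) t) * ∫ t in a..b, g t := rfl

end Cheby

section LogConc
variable {g : ℝ → ℝ}

/-- Four-point inequality for a logconcave positive function:
if `{x, y}` is inside `{p, q}` (same sum), then `g p * g q ≤ g x * g y`. -/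
lemma four_point (hpos : ∀ t ∈ Icc (0:ℝ) 1, 0 < g t)
    (hlc : ConcaveOn ℝ (Icc (0:ℝ) 1) fun t => Real.log (g t))
    {p q x y : ℝ} (hp : p ∈ Icc (0:ℝ) 1) (hq : q ∈ Icc (0:ℝ) 1)
    (hpx : p ≤ x) (hxq : x ≤ q) (hpy : p ≤ y) (hyq : y ≤ q)
    (hsum : x + y = p + q) : g p * g q ≤ g x * g y := by
  rcases eq_or_lt_of_le (hpx.trans hxq) with hpq | hpq
  · have hxp : x = p := le_antisymm (by linarith) hpx
    have hyq' : y = q := by linarith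
    rw [hxp, hyq']
  · have hqp : q - p ≠ 0 := ne_of_gt (by linarith)
    set l : ℝ := (q - x) / (q - p) with hl
    have hl0 : 0 ≤ l := div_nonneg (by linarith) (by linarith)
    have hl1 : l ≤ 1 := (div_le_one (by linarith)).2 (by linarith)
    have hx : x = l * p + (1 - l) * q := by
      have : l * (q - p) = q - x := by rw [hl]; exact div_mul_cancel₀ _ hqp
      linear_combination this
    have hy : y = (1 - l) * p + l * q := by
      have : y = p + q - x := by linarith
      rw [this, hx]; ring
    have c1 : l • Real.log (g p) + (1 - l) • Real.log (g q)
        ≤ Real.log (g (l • p + (1 - l) • q)) := hlc.2 hp hq hl0 (by linarith) (by ring)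
    have c2 : (1 - l) • Real.log (g p) + l • Real.log (g q)
        ≤ Real.log (g ((1 - l) • p + l • q)) := hlc.2 hp hq (by linarith) hl0 (by ring)
    simp only [smul_eq_mul] at c1 c2
    have hsumlog : Real.log (g p) + Real.log (g q)
        ≤ Real.log (g x) + Real.log (g y) := by
      rw [hx, hy]; linarith
    have hgp := hpos p hp; have hgq := hpos q hq
    have hgx := hpos x ⟨hp.1.trans hpx, hxq.trans hq.2⟩
    have hgy := hpos y ⟨hp.1.trans hpy, hyq.trans hq.2⟩
    calc g p * g q = Real.exp (Real.log (g p) + Real.log (g q)) := by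
          rw [Real.exp_add, Real.exp_log hgp, Real.exp_log hgq]
      _ ≤ Real.exp (Real.log (g x) + Real.log (g y)) := Real.exp_le_exp.2 hsumlog
      _ = g x * g y := by rw [Real.exp_add, Real.exp_log hgx, Real.exp_log hgy]

/-- For logconcave `g`, the ratio `g (t - δ) / g t` is nondecreasing. -/
lemma ratio_mono (hpos : ∀ t ∈ Icc (0:ℝ) 1, 0 < g t)
    (hlc : ConcaveOn ℝ (Icc (0:ℝ) 1) fun t => Real.log (g t))
    {a b δ : ℝ} (hδ : 0 ≤ δ) (ha : 0 ≤ a - δ) (hb : b ≤ 1) :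
    MonotoneOn (fun t => g (t - δ) / g t) (Icc a b) := by
  intro t ht t' ht' htt'
  have h1 : t - δ ∈ Icc (0:ℝ) 1 := ⟨by linarith [ht.1], by linarith [ht.2]⟩
  have h4 : t' ∈ Icc (0:ℝ) 1 := ⟨by linarith [ht'.1], by linarith [ht'.2]⟩
  have h2 : t ∈ Icc (0:ℝ) 1 := ⟨by linarith [ht.1], by linarith [ht.2]⟩
  have h3 : t' - δ ∈ Icc (0:ℝ) 1 := ⟨by linarith [ht'.1], by linarith [ht'.2]⟩
  have key : g (t - δ) * g t' ≤ g t * g (t' - δ) :=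
    four_point hpos hlc h1 h4 (by linarith) (by linarith) (by linarith) (by linarith)
      (by ring)
  rw [div_le_div_iff₀ (hpos t h2) (hpos t' h4)]
  nlinarith [hpos t h2, hpos t' h4]

end LogConc

section Shift
variable {g : ℝ → ℝ}

/-- Shifting an interval down by `δ` lowers the conditional mean by at most `δ`
(for logconcave positive `g`). -/
lemma shift_mean (hg : Continuous g) (hpos : ∀ t ∈ Icc (0:ℝ) 1, 0 < g t)
    (hlc : ConcaveOn ℝ (Icc (0:ℝ) 1) fun t => Real.log (g t))
    {a b δ : ℝ} (hδ : 0 ≤ δ) (ha : 0 ≤ a - δ) (hab : a < b) (hb : b ≤ 1) :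
    condMean g a b - δ ≤ condMean g (a - δ) (b - δ) := by
  have hsub : Icc a b ⊆ Icc (0:ℝ) 1 := Icc_subset_Icc (by linarith) hb
  have hgpos : ∀ t ∈ Icc a b, 0 < g t := fun t ht => hpos t (hsub ht)
  have hLpos : ∀ t ∈ Icc a b, 0 < g (t - δ) / g t := fun t ht =>
    div_pos (hpos _ ⟨by linarith [ht.1], by linarith [ht.2]⟩) (hgpos t ht)
  have hLcont : ContinuousOn (fun t => g (t - δ) / g t) (Icc a b) :=
    ((hg.comp (continuous_sub_right δ)).continuousOn).div hg.continuousOn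
      (fun t ht => (hgpos t ht).ne')
  have key := mean_le_mean_mul hg.continuousOn hgpos hLcont hLpos
    (ratio_mono hpos hlc hδ ha hb) hab
  have e0 : (∫ t in a..b, g (t - δ) / g t * g t) = ∫ t in (a-δ)..(b-δ), g t := by
    rw [← intervalIntegral.integral_comp_sub_right g δ]
    refine intervalIntegral.integral_congr (fun t ht => ?_)
    rw [uIcc_of_le hab.le] at ht
    have := (hgpos t ht).ne'
    field_simp
  have e1 : (∫ t in a..b, t * (g (t - δ) / g t * g t))
      = (∫ t in (a-δ)..(b-δ), t * g t) + δ * ∫ t in (a-δ)..(b-δ), g t := by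
    have hcongr : EqOn (fun t => t * (g (t - δ) / g t * g t))
        (fun t => (t - δ) * g (t - δ) + δ * g (t - δ)) (uIcc a b) := by
      intro t ht
      rw [uIcc_of_le hab.le] at ht
      have := (hgpos t ht).ne'
      field_simp; ring
    rw [intervalIntegral.integral_congr hcongr, intervalIntegral.integral_add
        (Continuous.intervalIntegrable (by continuity) a b)
        (Continuous.intervalIntegrable (by continuity) a b),
      intervalIntegral.integral_const_mul]
    congr 1
    · exact intervalIntegral.integral_comp_sub_right (fun x => x * g x) δ
    · rw [intervalIntegral.integral_comp_sub_right g δ]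
  have h0' : 0 < ∫ t in (a-δ)..(b-δ), g t := by
    refine I0_pos hg.continuousOn (fun t ht => hpos t ⟨by linarith [ht.1], by linarith [ht.2]⟩)
      (by linarith)
  simp only [condMean] at key
  rw [e0, e1] at key
  calc condMean g a b - δ
      ≤ ((∫ t in (a-δ)..(b-δ), t * g t) + δ * ∫ t in (a-δ)..(b-δ), g t)
          / (∫ t in (a-δ)..(b-δ), g t) - δ := by
        rw [condMean]; linarith [key]
    _ = (∫ t in (a-δ)..(b-δ), t * g t) / (∫ t in (a-δ)..(b-δ), g t) := by
        field_simp; ring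
  
end Shift

section MLR

lemma condMean_congr {g h : ℝ → ℝ} {a b : ℝ} (he : EqOn g h (uIcc a b)) :
    condMean g a b = condMean h a b := by
  rw [condMean, condMean, intervalIntegral.integral_congr he,
    intervalIntegral.integral_congr (fun t ht => by rw [he ht])]

/-- An MLR-increase of the density raises conditional means. -/
lemma mlr_mean {f fhat : ℝ → ℝ} (hf_cont : Continuous f)
    (hf_pos : ∀ t ∈ Icc (0:ℝ) 1, 0 < f t) (hfhat_cont : Continuous fhat)
    (hfhat_pos : ∀ t ∈ Icc (0:ℝ) 1, 0 < fhat t)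
    (hratio : MonotoneOn (fun t => fhat t / f t) (Icc (0:ℝ) 1))
    {a b : ℝ} (ha : 0 ≤ a) (hab : a < b) (hb : b ≤ 1) :
    condMean f a b ≤ condMean fhat a b := by
  have hsub : Icc a b ⊆ Icc (0:ℝ) 1 := Icc_subset_Icc ha hb
  have hgpos : ∀ t ∈ Icc a b, 0 < f t := fun t ht => hf_pos t (hsub ht)
  have hLpos : ∀ t ∈ Icc a b, 0 < fhat t / f t := fun t ht =>
    div_pos (hfhat_pos t (hsub ht)) (hgpos t ht)
  have hLcont : ContinuousOn (fun t => fhat t / f t) (Icc a b) :=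
    hfhat_cont.continuousOn.div hf_cont.continuousOn (fun t ht => (hgpos t ht).ne')
  have key := mean_le_mean_mul hf_cont.continuousOn hgpos hLcont hLpos
    (hratio.mono hsub) hab
  have : condMean (fun t => fhat t / f t * f t) a b = condMean fhat a b := by
    refine condMean_congr (fun t ht => ?_)
    rw [uIcc_of_le hab.le] at ht
    have := (hgpos t ht).ne'
    field_simp
  linarith [this ▸ key]

end MLR

section Dprime
variable {g : ℝ → ℝ}

/-- Strict version of "the conditional mean increases by less than the right endpoint":
for logconcave positive `g`, `b ↦ b - condMean g a b` is strictly increasing. -/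
lemma mean_right_strict (hg : Continuous g) (hpos : ∀ t ∈ Icc (0:ℝ) 1, 0 < g t)
    (hlc : ConcaveOn ℝ (Icc (0:ℝ) 1) fun t => Real.log (g t))
    {a b' b : ℝ} (ha : 0 ≤ a) (h1 : a < b') (h2 : b' < b) (hb : b ≤ 1) :
    condMean g a b - condMean g a b' < b - b' := by
  set G : ℝ → ℝ := fun c => ∫ t in a..c, g t with hGdef
  set H : ℝ → ℝ := fun c => ∫ t in a..c, G t with hHdef
  have hG_deriv : ∀ c : ℝ, HasDerivAt G (g c) c := fun c =>
    intervalIntegral.integral_hasDerivAt_right (hg.intervalIntegrable a c)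
      (hg.aestronglyMeasurable.stronglyMeasurableAtFilter) hg.continuousAt
  have hG_cont : Continuous G := by
    rw [continuous_iff_continuousAt]; exact fun c => (hG_deriv c).continuousAt
  -- integration by parts identity
  have ID : ∀ c : ℝ, (∫ t in a..c, t * g t) = c * G c - H c := by
    intro c
    have hparts := intervalIntegral.integral_mul_deriv_eq_deriv_mul
      (u := fun x : ℝ => x) (v := G) (u' := fun _ : ℝ => 1) (v' := g)
      (a := a) (b := c)
      (fun x _ => hasDerivAt_id x) (fun x _ => hG_deriv x)
      (continuous_const.intervalIntegrable a c) (hg.intervalIntegrable a c)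
    have hGa : G a = 0 := intervalIntegral.integral_same
    simpa [hGa, one_mul, ← hHdef] using hparts
  have hGpos : ∀ c, a < c → c ≤ 1 → 0 < G c := fun c hc hc1 =>
    I0_pos hg.continuousOn (fun t ht => hpos t ⟨ha.trans ht.1, ht.2.trans hc1⟩) hc
  -- pointwise comparison for s ∈ (b', b)
  have step5 : ∀ s, s ∈ Ioo b' b → g s * H b' < G b' * G s := by
    intro s hs
    have hs1 : s ≤ 1 := hs.2.le.trans hb
    have lg1 : ∀ t ∈ Icc a b', g s * G t ≤ g t * (G s - G (a + s - t)) := by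
      intro t ht
      have hts : t < s := lt_of_le_of_lt ht.2 hs.1
      have e1 : g s * G t = ∫ r in a..t, g s * g r := by
        rw [intervalIntegral.integral_const_mul]
      have e2 : (∫ r in a..t, g t * g (r + (s - t)))
          = g t * (G s - G (a + s - t)) := by
        rw [intervalIntegral.integral_const_mul, intervalIntegral.integral_comp_add_right]
        have : (∫ r in a + (s-t)..t + (s-t), g r)
            = G (t + (s - t)) - G (a + (s - t)) := by
          rw [hGdef]
          have i1 : IntervalIntegrable g volume a (a + (s-t)) := hg.intervalIntegrable _ _
          have i2 : IntervalIntegrable g volume (a + (s-t)) (t + (s-t)) :=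
            hg.intervalIntegrable _ _
          have hadj := intervalIntegral.integral_add_adjacent_intervals i1 i2
          simp only []
          linarith [hadj]
        rw [this, show t + (s - t) = s from by ring, show a + (s - t) = a + s - t from by ring]
      rw [e1, ← e2]
      refine intervalIntegral.integral_mono_on ht.1
        ((continuous_const.mul hg).intervalIntegrable a t)
        ((continuous_const.mul (hg.comp (continuous_add_right _))).intervalIntegrable a t)
        (fun r hr => ?_)
      have hr1 : r ∈ Icc (0:ℝ) 1 := ⟨ha.trans hr.1, by linarith [hr.2, ht.2, hs.2]⟩
      have hs01 : s ∈ Icc (0:ℝ) 1 := ⟨by linarith [hs.1, ht.1, hr.1], hs1⟩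
      have h4p := four_point hpos hlc (p := r) (q := s) (x := t) (y := r + (s - t))
        hr1 hs01 hr.2 hts.le (by linarith) (by linarith [hr.2]) (by ring)
      linarith [h4p, mul_comm (g r) (g s)]
    -- integrate lg1 over t ∈ [a, b']
    have hcont3 : Continuous fun t => G (a + s - t) :=
      hG_cont.comp (continuous_const.sub continuous_id)
    have hcont2 : Continuous fun t => g t * (G s - G (a + s - t)) :=
      hg.mul (continuous_const.sub hcont3)
    have hmono : (∫ t in a..b', g s * G t) ≤ ∫ t in a..b', g t * (G s - G (a + s - t)) :=
      intervalIntegral.integral_mono_on h1.le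
        ((continuous_const.mul hG_cont).intervalIntegrable a b')
        (hcont2.intervalIntegrable a b') lg1
    have eL : (∫ t in a..b', g s * G t) = g s * H b' := by
      rw [intervalIntegral.integral_const_mul]
    have hR : (0:ℝ) < ∫ t in a..b', g t * G (a + s - t) := by
      refine intervalIntegral_pos_of_pos_on ((hg.mul hcont3).intervalIntegrable a b')
        (fun t ht => ?_) h1
      have hgt : 0 < g t := hpos t ⟨ha.trans ht.1.le, by linarith [ht.2]⟩
      have : 0 < G (a + s - t) := hGpos _ (by linarith [ht.2, hs.1]) (by linarith [ht.1, hs1])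
      exact mul_pos hgt this
    have eR : (∫ t in a..b', g t * (G s - G (a + s - t)))
        = G s * G b' - ∫ t in a..b', g t * G (a + s - t) := by
      have : ∀ t, g t * (G s - G (a + s - t)) = G s * g t - g t * G (a + s - t) := by
        intro t; ring
      simp_rw [this]
      have i5 : IntervalIntegrable (fun t => G s * g t) volume a b' :=
        (continuous_const.mul hg).intervalIntegrable a b'
      have i6 : IntervalIntegrable (fun t => g t * G (a + s - t)) volume a b' :=
        (hg.mul hcont3).intervalIntegrable a b'
      rw [intervalIntegral.integral_sub i5 i6, intervalIntegral.integral_const_mul]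
    linarith [eL ▸ eR ▸ hmono]
  -- integrate the strict inequality over s ∈ (b', b)
  have hmain : H b' * (G b - G b') < G b' * (H b - H b') := by
    have hposint : (0:ℝ) < ∫ s in b'..b, (G b' * G s - g s * H b') := by
      refine intervalIntegral_pos_of_pos_on
        (((continuous_const.mul hG_cont).sub (hg.mul continuous_const)).intervalIntegrable b' b)
        (fun s hs => by linarith [step5 s hs]) h2
    have e3 : (∫ s in b'..b, (G b' * G s - g s * H b'))
        = G b' * (∫ s in b'..b, G s) - (∫ s in b'..b, g s) * H b' := by
      rw [intervalIntegral.integral_sub (f := fun s => G b' * G s) (g := fun s => g s * H b')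
        ((continuous_const.mul hG_cont).intervalIntegrable b' b)
        ((hg.mul continuous_const).intervalIntegrable b' b),
        intervalIntegral.integral_const_mul, intervalIntegral.integral_mul_const]
    have e4 : (∫ s in b'..b, G s) = H b - H b' := by
      have i1 : IntervalIntegrable G volume a b' := hG_cont.intervalIntegrable _ _
      have i2 : IntervalIntegrable G volume b' b := hG_cont.intervalIntegrable _ _
      have hadj := intervalIntegral.integral_add_adjacent_intervals i1 i2
      rw [hHdef]; simp only []; linarith [hadj]
    have e5 : (∫ s in b'..b, g s) = G b - G b' := by
      have i1 : IntervalIntegrable g volume a b' := hg.intervalIntegrable _ _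
      have i2 : IntervalIntegrable g volume b' b := hg.intervalIntegrable _ _
      have hadj := intervalIntegral.integral_add_adjacent_intervals i1 i2
      rw [hGdef]; simp only []; linarith [hadj]
    rw [e3, e4, e5] at hposint
    linarith
  -- conclude
  have hGb : 0 < G b := hGpos b (by linarith) hb
  have hGb' : 0 < G b' := hGpos b' h1 (by linarith)
  have hfrac : H b' / G b' < H b / G b := by
    rw [div_lt_div_iff₀ hGb' hGb]; nlinarith
  have em : condMean g a b = b - H b / G b := by
    rw [condMean, ID b]
    show (b * G b - H b) / G b = _
    rw [sub_div, mul_div_assoc, div_self hGb.ne', mul_one]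
  have em' : condMean g a b' = b' - H b' / G b' := by
    rw [condMean, ID b']
    show (b' * G b' - H b') / G b' = _
    rw [sub_div, mul_div_assoc, div_self hGb'.ne', mul_one]
  rw [em, em']
  linarith

end Dprime

section Key
variable {g : ℝ → ℝ}

/-- The key comparison lemma: if both endpoints move up by at most `δ` (going from
`(a,b)` to `(a',b')` in reverse), the conditional mean drops by at most `δ`, with
equality only when the left endpoint moves by exactly `δ`. -/
lemma key_mean (hg : Continuous g) (hpos : ∀ t ∈ Icc (0:ℝ) 1, 0 < g t)
    (hlc : ConcaveOn ℝ (Icc (0:ℝ) 1) fun t => Real.log (g t))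
    {a b a' b' δ : ℝ} (ha : 0 ≤ a) (hb : b ≤ 1) (hab : a < b)
    (ha' : 0 ≤ a') (hb' : b' ≤ 1) (hab' : a' < b')
    (hδ : 0 < δ) (h1 : a - δ ≤ a') (h2 : b - δ ≤ b') :
    condMean g a b - δ ≤ condMean g a' b' ∧
      (condMean g a' b' = condMean g a b - δ → a' = a - δ) := by
  have hposon : ∀ {c d : ℝ}, 0 ≤ c → d ≤ 1 → ∀ t ∈ Icc c d, 0 < g t :=
    fun hc hd t ht => hpos t ⟨hc.trans ht.1, ht.2.trans hd⟩
  rcases le_or_gt b δ with hcase | hcase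
  · -- δ ≥ b : everything strict
    have hub : condMean g a b < b := mean_lt hg.continuousOn (hposon ha hb) hab
    have hlb : a' < condMean g a' b' := lt_mean hg.continuousOn (hposon ha' hb') hab'
    constructor
    · linarith
    · intro heq; linarith
  · -- δ < b
    set b'' : ℝ := b - δ with hb''def
    set a'' : ℝ := max (a - δ) 0 with ha''def
    have hb''0 : 0 < b'' := by simp [hb''def]; linarith
    have ha''0 : 0 ≤ a'' := le_max_right _ _
    have ha''b'' : a'' < b'' := by
      rcases le_or_gt (a - δ) 0 with h | h
      · rw [ha''def, max_eq_right h]; exact hb''0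
      · rw [ha''def, max_eq_left h.le]; linarith
    have ha''a' : a'' ≤ a' := max_le (by linarith) ha'
    have hb''b' : b'' ≤ b' := by linarith
    -- monotonicity chain
    have hchain1 : condMean g a'' b'' ≤ condMean g a'' b' := by
      rcases eq_or_lt_of_le hb''b' with h | h
      · rw [h]
      · exact (mean_mono_right hg.continuousOn (hposon ha''0 hb') ha''b'' h).le
    have hchain2 : condMean g a'' b' ≤ condMean g a' b' := by
      rcases eq_or_lt_of_le ha''a' with h | h
      · rw [h]
      · exact (mean_mono_left hg.continuousOn (hposon ha''0 hb') h hab').le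
    have hchain2' : a'' < a' → condMean g a'' b' < condMean g a' b' :=
      fun h => mean_mono_left hg.continuousOn (hposon ha''0 hb') h hab'
    -- the shift bound
    rcases le_or_gt δ a with hda | hda
    · -- a'' = a - δ, clean shift
      have ha'' : a'' = a - δ := max_eq_left (by linarith)
      have hshift : condMean g a b - δ ≤ condMean g (a - δ) (b - δ) :=
        shift_mean hg hpos hlc hδ.le (by linarith) hab hb
      have hineq : condMean g a b - δ ≤ condMean g a' b' := by
        calc condMean g a b - δ ≤ condMean g a'' b'' := by rw [ha'', hb''def]; exact hshift
          _ ≤ condMean g a'' b' := hchain1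
          _ ≤ condMean g a' b' := hchain2
      refine ⟨hineq, fun heq => ?_⟩
      by_contra hne
      have h' : a'' < a' := lt_of_le_of_ne ha''a' (fun hc => hne (by rw [← hc, ha'']))
      have := hchain2' h'
      have hge : condMean g a b - δ ≤ condMean g a'' b'' := by
        rw [ha'', hb''def]; exact hshift
      linarith
    · -- a < δ : strict via mean_right_strict
      have ha'' : a'' = 0 := max_eq_right (by linarith)
      have hstrict : condMean g a b - δ < condMean g a'' b'' := by
        have hsub1 : condMean g a b - a ≤ condMean g (a - a) (b - a) :=
          shift_mean hg hpos hlc ha (by linarith) hab hb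
        rw [sub_self] at hsub1
        have hsub2 : condMean g 0 (b - a) - condMean g 0 (b - δ) < (b - a) - (b - δ) :=
          mean_right_strict hg hpos hlc le_rfl (by linarith) (by linarith) (by linarith)
        rw [ha'', hb''def]
        linarith
      have hineq : condMean g a b - δ < condMean g a' b' :=
        lt_of_lt_of_le hstrict (hchain1.trans hchain2)
      exact ⟨hineq.le, fun heq => absurd heq (by linarith)⟩

end Key

lemma s_strict {N : ℕ} {s : ℕ → ℝ} (h : ∀ k < N, s k < s (k+1)) :
    ∀ {j k}, j < k → k ≤ N → s j < s k := by
  intro j k hjk hkN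
  induction k with
  | zero => omega
  | succ n ih =>
    rcases Nat.lt_succ_iff_lt_or_eq.mp hjk with h' | h'
    · exact (ih h' (by omega)).trans (h n (by omega))
    · subst h'; exact h j (by omega)

/-- comparative statics: likelihood-ratio increase of the prior density. -/
theorem stmt_6 (f fhat u : ℝ → ℝ) (N : ℕ) (hN : 2 ≤ N)
    (hf_cont : Continuous f) (hf_pos : ∀ t ∈ Icc (0:ℝ) 1, 0 < f t)
    (hf_prob : (∫ t in (0:ℝ)..1, f t) = 1)
    (hfhat_cont : Continuous fhat) (hfhat_pos : ∀ t ∈ Icc (0:ℝ) 1, 0 < fhat t)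
    (hfhat_prob : (∫ t in (0:ℝ)..1, fhat t) = 1)
    (hu : ContDiff ℝ 2 u)
    (hu'' : ∀ t ∈ Icc (0:ℝ) 1, 0 < deriv (deriv u) t)
    (hf_lc : LogConcaveOn01 f) (hfhat_lc : LogConcaveOn01 fhat)
    (hu_lc : LogConcaveOn01 (deriv (deriv u)))
    (hratio : MonotoneOn (fun t => fhat t / f t) (Icc (0:ℝ) 1))
    (s x shat xhat : ℕ → ℝ)
    (h1 : DualSystem f (deriv (deriv u)) N s x)
    (h2 : DualSystem fhat (deriv (deriv u)) N shat xhat) :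
    (∀ k, 1 ≤ k → k ≤ N - 1 → s k ≤ shat k) ∧
    (∀ k, 1 ≤ k → k ≤ N → x k ≤ xhat k) := by
  set w : ℝ → ℝ := deriv (deriv u) with hwdef
  have hw_cont : Continuous w := by
    have h0 : ContDiff ℝ (1 + 1 : ℕ) u := by exact_mod_cast hu
    have h1 : ContDiff ℝ 1 (deriv u) := (contDiff_succ_iff_deriv.mp h0).2.2
    exact h1.continuous_deriv le_rfl
  obtain ⟨hs0, hsN, hsinc, hsx, hss⟩ := h1
  obtain ⟨hhs0, hhsN, hhsinc, hhsx, hhss⟩ := h2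
  -- structural bounds for both systems
  have hsbd : ∀ k ≤ N, 0 ≤ s k ∧ s k ≤ 1 := by
    intro k hk
    constructor
    · rcases Nat.eq_zero_or_pos k with h | h
      · rw [h, hs0]
      · rw [← hs0]; exact (s_strict hsinc h hk).le
    · rcases eq_or_lt_of_le hk with h | h
      · rw [h, hsN]
      · rw [← hsN]; exact (s_strict hsinc h le_rfl).le
  have hhsbd : ∀ k ≤ N, 0 ≤ shat k ∧ shat k ≤ 1 := by
    intro k hk
    constructor
    · rcases Nat.eq_zero_or_pos k with h | h
      · rw [h, hhs0]
      · rw [← hhs0]; exact (s_strict hhsinc h hk).le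
    · rcases eq_or_lt_of_le hk with h | h
      · rw [h, hhsN]
      · rw [← hhsN]; exact (s_strict hhsinc h le_rfl).le
  -- mean characterizations with clean indices
  have hxe : ∀ k < N, x (k+1) = condMean f (s k) (s (k+1)) := by
    intro k hk
    have := hsx (k+1) (by omega) (by omega)
    simpa using this
  have hhxe : ∀ k < N, xhat (k+1) = condMean fhat (shat k) (shat (k+1)) := by
    intro k hk
    have := hhsx (k+1) (by omega) (by omega)
    simpa using this
  -- x strictly inside the cells
  have hxin : ∀ k < N, s k < x (k+1) ∧ x (k+1) < s (k+1) := by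
    intro k hk
    have hsk := hsbd k (by omega)
    have hsk1 := hsbd (k+1) (by omega)
    have hlt := hsinc k hk
    have hposon : ∀ t ∈ Icc (s k) (s (k+1)), 0 < f t :=
      fun t ht => hf_pos t ⟨hsk.1.trans ht.1, ht.2.trans hsk1.2⟩
    rw [hxe k hk]
    exact ⟨lt_mean hf_cont.continuousOn hposon hlt, mean_lt hf_cont.continuousOn hposon hlt⟩
  have hhxin : ∀ k < N, shat k < xhat (k+1) ∧ xhat (k+1) < shat (k+1) := by
    intro k hk
    have hsk := hhsbd k (by omega)
    have hsk1 := hhsbd (k+1) (by omega)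
    have hlt := hhsinc k hk
    have hposon : ∀ t ∈ Icc (shat k) (shat (k+1)), 0 < fhat t :=
      fun t ht => hfhat_pos t ⟨hsk.1.trans ht.1, ht.2.trans hsk1.2⟩
    rw [hhxe k hk]
    exact ⟨lt_mean hfhat_cont.continuousOn hposon hlt, mean_lt hfhat_cont.continuousOn hposon hlt⟩
  -- the max gap δ
  have hne1 : (Finset.range (N+1)).Nonempty := ⟨0, by simp⟩
  have hne2 : (Finset.Icc 1 N).Nonempty := ⟨1, by simp; omega⟩
  set δ : ℝ := max ((Finset.range (N+1)).sup' hne1 fun k => s k - shat k)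
      ((Finset.Icc 1 N).sup' hne2 fun k => x k - xhat k) with hδdef
  have hδs : ∀ k ≤ N, s k - shat k ≤ δ := by
    intro k hk
    have hm : k ∈ Finset.range (N+1) := by simp only [Finset.mem_range]; omega
    exact le_max_of_le_left (Finset.le_sup' (fun k => s k - shat k) hm)
  have hδx : ∀ k, 1 ≤ k → k ≤ N → x k - xhat k ≤ δ := by
    intro k h1k hk
    have hm : k ∈ Finset.Icc 1 N := by simp only [Finset.mem_Icc]; omega
    exact le_max_of_le_right (Finset.le_sup' (fun k => x k - xhat k) hm)
  have hδle : δ ≤ 0 := by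
    by_contra hcon
    push_neg at hcon
    -- the two propagation steps
    have hxstep : ∀ k, k < N → s k - shat k < δ → x (k+1) - xhat (k+1) < δ := by
      intro k hk hlt
      rcases eq_or_lt_of_le (hδx (k+1) (by omega) (by omega)) with heq | h
      · exfalso
        have hsk := hsbd k (by omega)
        have hsk1 := hsbd (k+1) (by omega)
        have hhsk := hhsbd k (by omega)
        have hhsk1 := hhsbd (k+1) (by omega)
        have hkey := key_mean hf_cont hf_pos hf_lc hsk.1 hsk1.2 (hsinc k hk)
          hhsk.1 hhsk1.2 (hhsinc k hk) hcon (by linarith [hδs k (by omega : k ≤ N)])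
          (by linarith [hδs (k+1) (by omega : k+1 ≤ N)])
        have hmlr := mlr_mean hf_cont hf_pos hfhat_cont hfhat_pos hratio
          hhsk.1 (hhsinc k hk) hhsk1.2
        have hveq : condMean f (shat k) (shat (k+1)) = condMean f (s k) (s (k+1)) - δ := by
          have e1 := hxe k hk
          have e2 := hhxe k hk
          have : xhat (k+1) = x (k+1) - δ := by linarith
          rw [e2] at this
          rw [e1] at this
          linarith [hkey.1, hmlr]
        have := hkey.2 hveq
        linarith
      · exact h
    have hsstep : ∀ k, 1 ≤ k → k ≤ N - 1 → x k - xhat k < δ → s k - shat k < δ := by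
      intro k h1k hk hlt
      rcases eq_or_lt_of_le (hδs k (by omega)) with heq | h
      · exfalso
        obtain ⟨n, rfl⟩ : ∃ n, k = n + 1 := ⟨k - 1, by omega⟩
        have hxa := hxin n (by omega)
        have hxb := hxin (n+1) (by omega)
        have hhxa := hhxin n (by omega)
        have hhxb := hhxin (n+1) (by omega)
        have hsa := hsbd n (by omega); have hsb := hsbd (n+2) (by omega)
        have hhsa := hhsbd n (by omega); have hhsb := hhsbd (n+2) (by omega)
        have hxbd1 : 0 ≤ x (n+1) := by linarith [hxa.1, hsa.1]
        have hxbd2 : x (n+2) ≤ 1 := by linarith [hxb.2, hsb.2]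
        have hxlt : x (n+1) < x (n+2) := by linarith [hxa.2, hxb.1]
        have hhxbd1 : 0 ≤ xhat (n+1) := by linarith [hhxa.1, hhsa.1]
        have hhxbd2 : xhat (n+2) ≤ 1 := by linarith [hhxb.2, hhsb.2]
        have hhxlt : xhat (n+1) < xhat (n+2) := by linarith [hhxa.2, hhxb.1]
        have hw_pos : ∀ t ∈ Icc (0:ℝ) 1, 0 < w t := hu''
        have hkey := key_mean hw_cont hw_pos hu_lc hxbd1 hxbd2 hxlt
          hhxbd1 hhxbd2 hhxlt hcon
          (by linarith [hδx (n+1) (by omega : 1 ≤ n+1) (by omega : n+1 ≤ N)])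
          (by linarith [hδx (n+2) (by omega : 1 ≤ n+2) (by omega : n+2 ≤ N)])
        have es := hss (n+1) (by omega) (by omega)
        have ehs := hhss (n+1) (by omega) (by omega)
        have hveq : condMean w (xhat (n+1)) (xhat (n+2))
            = condMean w (x (n+1)) (x (n+2)) - δ := by
          rw [← es, ← ehs]; linarith
        have := hkey.2 hveq
        linarith
      · exact h
    -- downward induction: nothing attains δ
    have hC : ∀ k, k ≤ N → s k - shat k < δ := by
      intro k
      induction k with
      | zero => intro _; rw [hs0, hhs0]; simpa using hcon
      | succ n ih =>
        intro hn
        have hsn := ih (by omega)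
        have hx := hxstep n (by omega) hsn
        rcases eq_or_lt_of_le hn with h | h
        · rw [h, hsN, hhsN]; simpa using hcon
        · exact hsstep (n+1) (by omega) (by omega) hx
    have hX : ∀ k, 1 ≤ k → k ≤ N → x k - xhat k < δ := by
      intro k h1k hkN
      obtain ⟨n, rfl⟩ : ∃ n, k = n + 1 := ⟨k - 1, by omega⟩
      exact hxstep n (by omega) (hC n (by omega))
    -- but δ is attained
    obtain ⟨k1, hk1mem, hk1⟩ := Finset.exists_mem_eq_sup' hne1 (fun k => s k - shat k)
    obtain ⟨k2, hk2mem, hk2⟩ := Finset.exists_mem_eq_sup' hne2 (fun k => x k - xhat k)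
    simp only [Finset.mem_range] at hk1mem
    simp only [Finset.mem_Icc] at hk2mem
    rcases max_choice ((Finset.range (N+1)).sup' hne1 fun k => s k - shat k)
        ((Finset.Icc 1 N).sup' hne2 fun k => x k - xhat k) with h | h
    · have : δ = s k1 - shat k1 := by rw [hδdef, h, hk1]
      have := hC k1 (by omega)
      linarith
    · have : δ = x k2 - xhat k2 := by rw [hδdef, h, hk2]
      have := hX k2 hk2mem.1 hk2mem.2
      linarith
  constructor
  · intro k h1k hk
    have := hδs k (by omega)
    linarith
  · intro k h1k hk
    have := hδx k h1k hk
    linarith
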